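/- arXiv:1711.04066 — 15 statements merged into one kernel-verified Lean document; each statement's English description precedes it below -/
import Mathlib

section
/- Let M = {g_1, …, g_m} be a finite set of items with a fixed ordering and let v be a submodular valuation on M with v(M) = 1. Suppose there is no subset S of M with both v(S) ≥ 1/2 and v(M\S) ≥ 1/2. For each k, let δ_k = v({g_1, …, g_k}) − v({g_1, …, g_{k−1}}), and for S ⊆ M let χ(S) = Σ_{k : g_k ∈ S} δ_k. Then for every subset S of M, v(S) ≥ 1/2 if and only if χ(S) ≥ 1/2. -/
/-- For a submodular valuation `v` on `Fin m` with `v M = 1`, assuming no set `S` has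
both `v S ≥ 1/2` and `v (M \ S) ≥ 1/2`, we have `v S ≥ 1/2 ↔ χ S ≥ 1/2` for all `S`,
where `χ S = ∑ k ∈ S, δ k` and `δ k = v {j | j ≤ k} - v {j | j < k}`. -/
theorem half_iff_chi_half (m : ℕ) (v : Finset (Fin m) → ℝ)
    (h0 : v ∅ = 0)
    (hsubmod : ∀ S T : Finset (Fin m), S ⊆ T → ∀ g : Fin m,
      v (T ∪ {g}) - v T ≤ v (S ∪ {g}) - v S)
    (hM : v Finset.univ = 1)
    (hcut : ¬ ∃ S : Finset (Fin m), v S ≥ 1 / 2 ∧ v (Finset.univ \ S) ≥ 1 / 2)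
    (S : Finset (Fin m)) :
    v S ≥ 1 / 2 ↔
      ∑ k ∈ S, (v (Finset.univ.filter (fun j => j ≤ k)) -
          v (Finset.univ.filter (fun j => j < k))) ≥ 1 / 2 := by
  -- telescoping identity
  have step1 : ∀ T : Finset (Fin m),
      ∑ k : Fin m, (v (T.filter (fun j => j ≤ k)) - v (T.filter (fun j => j < k))) = v T := by
    intro T
    have hcong : ∀ k : Fin m,
        (v (T.filter (fun j => j ≤ k)) - v (T.filter (fun j => j < k)))
        = v (T.filter (fun (j : Fin m) => (j : ℕ) < (k : ℕ) + 1)) - v (T.filter (fun (j : Fin m) => (j : ℕ) < (k : ℕ))) := by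
      intro k
      have a1 : T.filter (fun j => j ≤ k) = T.filter (fun (j : Fin m) => (j : ℕ) < (k : ℕ) + 1) :=
        Finset.filter_congr (fun j _ => by rw [Fin.le_def, Nat.lt_succ_iff])
      have a2 : T.filter (fun j => j < k) = T.filter (fun (j : Fin m) => (j : ℕ) < (k : ℕ)) :=
        Finset.filter_congr (fun j _ => by rw [Fin.lt_def])
      rw [a1, a2]
    rw [Finset.sum_congr rfl (fun k _ => hcong k),
        Fin.sum_univ_eq_sum_range
          (fun i => v (T.filter (fun (j : Fin m) => (j : ℕ) < i + 1)) - v (T.filter (fun (j : Fin m) => (j : ℕ) < i))),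
        Finset.sum_range_sub (fun i => v (T.filter (fun (j : Fin m) => (j : ℕ) < i)))]
    have e1 : T.filter (fun (j : Fin m) => (j : ℕ) < m) = T :=
      Finset.filter_true_of_mem (fun j _ => j.isLt)
    have e0 : T.filter (fun (j : Fin m) => (j : ℕ) < 0) = ∅ := by simp
    rw [e1, e0, h0, sub_zero]
  -- χ S ≤ v S
  have hle : ∀ T : Finset (Fin m),
      ∑ k ∈ T, (v (Finset.univ.filter (fun j => j ≤ k)) -
          v (Finset.univ.filter (fun j => j < k))) ≤ v T := by
    intro T
    rw [← step1 T]
    have hzero : ∀ k ∈ Finset.univ, k ∉ T →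
        v (T.filter (fun j => j ≤ k)) - v (T.filter (fun j => j < k)) = 0 := by
      intro k _ hk
      have : T.filter (fun j => j ≤ k) = T.filter (fun j => j < k) := by
        ext j
        simp only [Finset.mem_filter]
        constructor
        · rintro ⟨hj, hle⟩
          rcases lt_or_eq_of_le hle with h | h
          · exact ⟨hj, h⟩
          · exact absurd (h ▸ hj) hk
        · rintro ⟨hj, hlt⟩; exact ⟨hj, le_of_lt hlt⟩
      rw [this, sub_self]
    rw [← Finset.sum_subset (Finset.subset_univ T) hzero]
    apply Finset.sum_le_sum
    intro k hk
    have hsub : T.filter (fun j => j < k) ⊆ Finset.univ.filter (fun j => j < k) :=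
      Finset.filter_subset_filter _ (Finset.subset_univ T)
    have h := hsubmod (T.filter (fun j => j < k)) (Finset.univ.filter (fun j => j < k)) hsub k
    have e2 : Finset.univ.filter (fun j => j < k) ∪ {k} = Finset.univ.filter (fun j => j ≤ k) := by
      ext j
      simp [le_iff_lt_or_eq]
      exact or_comm
    have e3 : T.filter (fun j => j < k) ∪ {k} = T.filter (fun j => j ≤ k) := by
      ext j
      simp only [Finset.mem_union, Finset.mem_filter, Finset.mem_singleton]
      constructor
      · rintro (⟨hj, hlt⟩ | rfl)
        · exact ⟨hj, le_of_lt hlt⟩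
        · exact ⟨hk, le_refl _⟩
      · rintro ⟨hj, hle⟩
        rcases lt_or_eq_of_le hle with h' | h'
        · exact Or.inl ⟨hj, h'⟩
        · exact Or.inr h'
    rw [e2, e3] at h
    exact h
  -- χ S + χ Sᶜ = 1
  have hsum : (∑ k ∈ S, (v (Finset.univ.filter (fun j => j ≤ k)) -
          v (Finset.univ.filter (fun j => j < k))))
      + (∑ k ∈ Finset.univ \ S, (v (Finset.univ.filter (fun j => j ≤ k)) -
          v (Finset.univ.filter (fun j => j < k)))) = 1 := by
    rw [add_comm, Finset.sum_sdiff (Finset.subset_univ S), step1 Finset.univ, hM]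
  constructor
  · intro hvS
    by_contra hχ
    push_neg at hχ
    have h1 : (1:ℝ) / 2 < ∑ k ∈ Finset.univ \ S, (v (Finset.univ.filter (fun j => j ≤ k)) -
          v (Finset.univ.filter (fun j => j < k))) := by linarith
    have h2 := hle (Finset.univ \ S)
    exact hcut ⟨S, hvS, by linarith⟩
  · intro hχ
    have := hle S
    linarith
end

section
/- Let v be a subadditive valuation on a finite set M of items with v(M) = 1 and let c ∈ [0, 1) be a real number. Assume the cut-failed condition holds, and let S be a c-minimal bundle. Then for every g ∈ S, max( v(S) − v(S\{g}), v((M\S) ∪ {g}) − v(M\S) ) ≥ (1 − c)/2. -/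
/-- A bundle `S ⊆ M` is `c`-acceptable for valuation `v` if `v S ≥ c * v (M \ S)`. -/
def Acceptable {ι : Type*} [DecidableEq ι] (M : Finset ι) (v : Finset ι → ℝ)
    (c : ℝ) (S : Finset ι) : Prop :=
  v S ≥ c * v (M \ S)

/-- A bundle `S ⊆ M` is `c`-minimal if it is `c`-acceptable but no `S \ {g}` with
`g ∈ S` is `c`-acceptable. -/
def CMinimal {ι : Type*} [DecidableEq ι] (M : Finset ι) (v : Finset ι → ℝ)
    (c : ℝ) (S : Finset ι) : Prop :=
  S ⊆ M ∧ Acceptable M v c S ∧ ∀ g ∈ S, ¬ Acceptable M v c (S \ {g})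

/-- The cut-failed condition: no subset `S` of `M` has both `S` and `M \ S`
`c`-acceptable. -/
def CutFailed {ι : Type*} [DecidableEq ι] (M : Finset ι) (v : Finset ι → ℝ)
    (c : ℝ) : Prop :=
  ¬ ∃ S : Finset ι, S ⊆ M ∧ Acceptable M v c S ∧ Acceptable M v c (M \ S)

/-- For a subadditive valuation with `v M = 1` and `c ∈ [0,1)`, under the cut-failed
condition, every item `g` of a `c`-minimal bundle `S` satisfies
`max (v S - v (S \ {g})) (v ((M \ S) ∪ {g}) - v (M \ S)) ≥ (1 - c) / 2`. -/
theorem minimal_marginal_value {ι : Type*} [DecidableEq ι] (M : Finset ι)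
    (v : Finset ι → ℝ) (h0 : v ∅ = 0)
    (hsub : ∀ S T : Finset ι, S ⊆ M → T ⊆ M → v (S ∪ T) ≤ v S + v T)
    (hM : v M = 1) (c : ℝ) (hc0 : 0 ≤ c) (hc1 : c < 1)
    (hcut : CutFailed M v c)
    (S : Finset ι) (hmin : CMinimal M v c S) :
    ∀ g ∈ S,
      max (v S - v (S \ {g})) (v ((M \ S) ∪ {g}) - v (M \ S)) ≥ (1 - c) / 2 := by
  obtain ⟨hS, hacc, hminS⟩ := hmin
  intro g hg
  have hgM : g ∈ M := hS hg
  by_contra hlt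
  rw [not_le, max_lt_iff] at hlt
  obtain ⟨h1, h2⟩ := hlt
  have hb : v (M \ S) < c * v S := by
    by_contra hb
    push_neg at hb
    exact hcut ⟨S, hS, hacc, by
      simpa [Acceptable, Finset.sdiff_sdiff_eq_self hS] using hb⟩
  have ha' : v (S \ {g}) < c * v ((M \ S) ∪ {g}) := by
    have hn := hminS g hg
    rw [Acceptable, not_le] at hn
    have heq : M \ (S \ {g}) = (M \ S) ∪ {g} := by
      ext x
      simp only [Finset.mem_sdiff, Finset.mem_union, Finset.mem_singleton]
      constructor
      · rintro ⟨hx, h⟩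
        by_cases hxg : x = g
        · exact Or.inr hxg
        · exact Or.inl ⟨hx, fun hxS => h ⟨hxS, hxg⟩⟩
      · rintro (⟨hx, h⟩ | rfl)
        · exact ⟨hx, fun h' => h h'.1⟩
        · exact ⟨hgM, fun h' => h'.2 rfl⟩
    rwa [heq] at hn
  have hab : 1 ≤ v S + v (M \ S) := by
    have := hsub S (M \ S) hS Finset.sdiff_subset
    rwa [Finset.union_sdiff_of_subset hS, hM] at this
  have hab' : 1 ≤ v (S \ {g}) + v ((M \ S) ∪ {g}) := by
    have hsub1 : S \ {g} ⊆ M := Finset.sdiff_subset.trans hS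
    have hsub2 : (M \ S) ∪ {g} ⊆ M :=
      Finset.union_subset Finset.sdiff_subset (by simpa using hgM)
    have h := hsub _ _ hsub1 hsub2
    have heq : (S \ {g}) ∪ ((M \ S) ∪ {g}) = M := by
      ext x
      simp only [Finset.mem_union, Finset.mem_sdiff, Finset.mem_singleton]
      constructor
      · rintro (⟨hx, _⟩ | ⟨hx, _⟩ | rfl)
        · exact hS hx
        · exact hx
        · exact hgM
      · intro hx
        by_cases hxg : x = g
        · exact Or.inr (Or.inr hxg)
        · by_cases hxS : x ∈ S
          · exact Or.inl ⟨hxS, hxg⟩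
          · exact Or.inr (Or.inl ⟨hx, hxS⟩)
    rwa [heq, hM] at h
  nlinarith [hb, ha', h1, h2, hab, hab']
end

section
/- Let v be a monotone valuation on a finite set M of items and let c ∈ [0, 1] be a real number. Assume the cut-failed condition holds. If S and T are c-minimal bundles, g ∈ S, and T ⊆ (M\S) ∪ {g}, then g ∈ T. -/
/-- For a monotone valuation and `c ∈ [0,1]`, under the cut-failed condition, if `S`
and `T` are `c`-minimal, `g ∈ S` and `T ⊆ (M \ S) ∪ {g}`, then `g ∈ T`. -/
theorem g_mem_T {ι : Type*} [DecidableEq ι] (M : Finset ι)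
    (v : Finset ι → ℝ) (h0 : v ∅ = 0)
    (hmono : ∀ S T : Finset ι, S ⊆ T → T ⊆ M → v S ≤ v T)
    (c : ℝ) (hc0 : 0 ≤ c) (hc1 : c ≤ 1)
    (hcut : CutFailed M v c)
    (S T : Finset ι) (hS : CMinimal M v c S) (hT : CMinimal M v c T)
    (g : ι) (hg : g ∈ S) (hsub : T ⊆ (M \ S) ∪ {g}) :
    g ∈ T := by
  by_contra hgT
  have hTMS : T ⊆ M \ S := by
    intro x hx
    rcases Finset.mem_union.1 (hsub hx) with h | h
    · exact h
    · exact absurd hx (by simp_all [Finset.mem_singleton.1 h])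
  have hSMT : S ⊆ M \ T := by
    intro x hx
    refine Finset.mem_sdiff.2 ⟨hS.1 hx, fun hxT => ?_⟩
    exact (Finset.mem_sdiff.1 (hTMS hxT)).2 hx
  apply hcut
  refine ⟨T, hT.1, hT.2.1, ?_⟩
  unfold Acceptable
  rw [Finset.sdiff_sdiff_eq_self hT.1]
  calc c * v T ≤ c * v (M \ S) :=
        mul_le_mul_of_nonneg_left (hmono _ _ hTMS Finset.sdiff_subset) hc0
    _ ≤ v S := hS.2.1
    _ ≤ v (M \ T) := hmono _ _ hSMT Finset.sdiff_subset
end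

section
/- Let v be a monotone valuation on a finite set M of items and let c ∈ [0, 1] be a real number. Assume the cut-failed condition holds. If S and T are c-minimal bundles and g₁, g₂ ∈ S satisfy T ⊆ (M\S) ∪ {g₁} and T ⊆ (M\S) ∪ {g₂}, then g₁ = g₂. -/
/-- For a monotone valuation and `c ∈ [0,1]`, under the cut-failed condition, if `S`
and `T` are `c`-minimal and `g₁, g₂ ∈ S` both satisfy `T ⊆ (M \ S) ∪ {gᵢ}`, then
`g₁ = g₂`. -/
theorem g_unique {ι : Type*} [DecidableEq ι] (M : Finset ι)
    (v : Finset ι → ℝ) (h0 : v ∅ = 0)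
    (hmono : ∀ S T : Finset ι, S ⊆ T → T ⊆ M → v S ≤ v T)
    (c : ℝ) (hc0 : 0 ≤ c) (hc1 : c ≤ 1)
    (hcut : CutFailed M v c)
    (S T : Finset ι) (hS : CMinimal M v c S) (hT : CMinimal M v c T)
    (g₁ g₂ : ι) (hg₁ : g₁ ∈ S) (hg₂ : g₂ ∈ S)
    (hsub₁ : T ⊆ (M \ S) ∪ {g₁}) (hsub₂ : T ⊆ (M \ S) ∪ {g₂}) :
    g₁ = g₂ := by
  by_contra hne
  have hTMS : T ⊆ M \ S := by
    intro x hx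
    rcases Finset.mem_union.1 (hsub₁ hx) with h1 | h1
    · exact h1
    rcases Finset.mem_union.1 (hsub₂ hx) with h2 | h2
    · exact h2
    exact absurd (Finset.mem_singleton.1 h1 ▸ Finset.mem_singleton.1 h2) (by simpa using hne)
  apply hcut
  refine ⟨T, hT.1, hT.2.1, ?_⟩
  have hSMT : S ⊆ M \ T := by
    intro x hx
    refine Finset.mem_sdiff.2 ⟨hS.1 hx, fun hxT => ?_⟩
    exact (Finset.mem_sdiff.1 (hTMS hxT)).2 hx
  have h1 : c * v T ≤ c * v (M \ S) :=
    mul_le_mul_of_nonneg_left (hmono T (M \ S) hTMS (Finset.sdiff_subset)) hc0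
  have h2 : c * v (M \ S) ≤ v S := hS.2.1
  have h3 : v S ≤ v (M \ T) := hmono S (M \ T) hSMT (Finset.sdiff_subset)
  unfold Acceptable
  rw [Finset.sdiff_sdiff_eq_self hT.1]
  linarith
end

section
/- Let v be a monotone valuation on a finite set M of items and let c ∈ [0, 1] be a real number. Assume the cut-failed condition holds. If S and T are c-minimal bundles, g ∈ S, and T ⊆ (M\S) ∪ {g}, then also g ∈ T and S ⊆ (M\T) ∪ {g}. -/
/-- For a monotone valuation and `c ∈ [0,1]`, under the cut-failed condition, if `S`
and `T` are `c`-minimal, `g ∈ S` and `T ⊆ (M \ S) ∪ {g}`, then also `g ∈ T` and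
`S ⊆ (M \ T) ∪ {g}`. -/
theorem graph_symmetric {ι : Type*} [DecidableEq ι] (M : Finset ι)
    (v : Finset ι → ℝ) (h0 : v ∅ = 0)
    (hmono : ∀ S T : Finset ι, S ⊆ T → T ⊆ M → v S ≤ v T)
    (c : ℝ) (hc0 : 0 ≤ c) (hc1 : c ≤ 1)
    (hcut : CutFailed M v c)
    (S T : Finset ι) (hS : CMinimal M v c S) (hT : CMinimal M v c T)
    (g : ι) (hg : g ∈ S) (hsub : T ⊆ (M \ S) ∪ {g}) :
    g ∈ T ∧ S ⊆ (M \ T) ∪ {g} := by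
  obtain ⟨hSM, hSacc, -⟩ := hS
  obtain ⟨hTM, hTacc, -⟩ := hT
  have hgT : g ∈ T := by
    by_contra hgT
    -- then T ⊆ M \ S
    have hTMS : T ⊆ M \ S := by
      intro x hx
      rcases Finset.mem_union.mp (hsub hx) with h | h
      · exact h
      · exact absurd (Finset.mem_singleton.mp h ▸ hx) hgT
    have hSMT : S ⊆ M \ T := by
      intro x hx
      refine Finset.mem_sdiff.mpr ⟨hSM hx, fun hxT => ?_⟩
      exact (Finset.mem_sdiff.mp (hTMS hxT)).2 hx
    refine hcut ⟨T, hTM, hTacc, ?_⟩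
    have hMT : M \ (M \ T) = T := by
      exact Finset.sdiff_sdiff_eq_self hTM
    unfold Acceptable
    rw [hMT]
    calc c * v T ≤ c * v (M \ S) :=
          mul_le_mul_of_nonneg_left (hmono _ _ hTMS Finset.sdiff_subset) hc0
      _ ≤ v S := hSacc
      _ ≤ v (M \ T) := hmono _ _ hSMT Finset.sdiff_subset
  refine ⟨hgT, fun x hx => ?_⟩
  by_cases hxg : x = g
  · exact Finset.mem_union_right _ (Finset.mem_singleton.mpr hxg)
  · refine Finset.mem_union_left _ (Finset.mem_sdiff.mpr ⟨hSM hx, fun hxT => ?_⟩)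
    rcases Finset.mem_union.mp (hsub hxT) with h | h
    · exact (Finset.mem_sdiff.mp h).2 hx
    · exact hxg (Finset.mem_singleton.mp h)
end

section
/- Let v be a monotone valuation on a finite set M of items and let c ∈ [0, 1] be a real number. Assume the cut-failed condition holds, and let S be a c-minimal bundle. Then the number of c-minimal bundles T for which there exists g ∈ S with T ⊆ (M\S) ∪ {g} is at least |S|. -/
/-- Any acceptable set contains a minimal acceptable subset. -/
lemma exists_minimal_acceptable {ι : Type*} [DecidableEq ι] (M : Finset ι)
    (v : Finset ι → ℝ) (c : ℝ) (X : Finset ι) (hX : Acceptable M v c X) :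
    ∃ T, T ⊆ X ∧ Acceptable M v c T ∧ ∀ g ∈ T, ¬ Acceptable M v c (T \ {g}) := by
  classical
  set A : Finset (Finset ι) := X.powerset.filter (fun T => Acceptable M v c T) with hA
  have hXA : X ∈ A := by simp [hA, hX]
  obtain ⟨T, hTA, hTmin⟩ := A.exists_min_image (fun T => T.card) ⟨X, hXA⟩
  simp only [hA, Finset.mem_filter, Finset.mem_powerset] at hTA
  refine ⟨T, hTA.1, hTA.2, fun g hg hacc => ?_⟩
  have hmem : T \ {g} ∈ A := by
    simp only [hA, Finset.mem_filter, Finset.mem_powerset]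
    exact ⟨(Finset.sdiff_subset).trans hTA.1, hacc⟩
  have := hTmin _ hmem
  have hlt : (T \ {g}).card < T.card := by
    apply Finset.card_lt_card
    constructor
    · exact Finset.sdiff_subset
    · intro hsub
      have := hsub hg
      simp at this
  omega

/-- For a monotone valuation and `c ∈ [0,1]`, under the cut-failed condition, the
number of `c`-minimal bundles `T` with `T ⊆ (M \ S) ∪ {g}` for some `g ∈ S` is at
least `|S|`, for any `c`-minimal bundle `S`. -/
theorem graph_outdegree {ι : Type*} [DecidableEq ι] (M : Finset ι)
    (v : Finset ι → ℝ) (h0 : v ∅ = 0)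
    (hmono : ∀ S T : Finset ι, S ⊆ T → T ⊆ M → v S ≤ v T)
    (c : ℝ) (hc0 : 0 ≤ c) (hc1 : c ≤ 1)
    (hcut : CutFailed M v c)
    (S : Finset ι) (hS : CMinimal M v c S) :
    S.card ≤
      {T : Finset ι | CMinimal M v c T ∧ ∃ g ∈ S, T ⊆ (M \ S) ∪ {g}}.ncard := by
  classical
  obtain ⟨hSM, hSacc, hSmin⟩ := hS
  have hnonneg : ∀ T : Finset ι, T ⊆ M → 0 ≤ v T := by
    intro T hT
    have := hmono ∅ T (Finset.empty_subset T) hT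
    linarith
  -- key: for each g ∈ S there is a minimal bundle containing g inside (M \ S) ∪ {g}
  have key : ∀ g : ι, ∃ T : Finset ι, g ∈ S →
      (CMinimal M v c T ∧ g ∈ T ∧ T ⊆ (M \ S) ∪ {g}) := by
    intro g
    by_cases hg : g ∈ S
    swap
    · exact ⟨∅, fun h => absurd h hg⟩
    set X : Finset ι := (M \ S) ∪ {g} with hXdef
    have hXM : X ⊆ M := by
      apply Finset.union_subset Finset.sdiff_subset
      simpa using hSM hg
    have hcompl : M \ X = S \ {g} := by
      ext x
      have hxMS : x ∈ S → x ∈ M := fun h => hSM h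
      simp only [hXdef, Finset.mem_sdiff, Finset.mem_union, Finset.mem_singleton]
      tauto
    -- X is acceptable
    have hXacc : Acceptable M v c X := by
      have hSg : ¬ Acceptable M v c (S \ {g}) := hSmin g hg
      have hScompl : M \ (S \ {g}) = X := by
        rw [← hcompl, Finset.sdiff_sdiff_eq_self hXM]
      unfold Acceptable at hSg ⊢
      rw [hScompl] at hSg
      push_neg at hSg
      rw [hcompl]
      have h1 : 0 ≤ v X := hnonneg X hXM
      have h2 : v (S \ {g}) < c * v X := hSg
      have h3 : 0 ≤ v (S \ {g}) := hnonneg _ ((Finset.sdiff_subset).trans hSM)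
      nlinarith [mul_nonneg (sub_nonneg.2 hc1) h3, mul_nonneg (sub_nonneg.2 hc1) h1]
    obtain ⟨T, hTX, hTacc, hTmin⟩ := exists_minimal_acceptable M v c X hXacc
    have hTM : T ⊆ M := hTX.trans hXM
    have hgT : g ∈ T := by
      by_contra hgT
      -- then T ⊆ M \ S, and M \ T ⊇ S, contradicting cut-failed
      have hTMS : T ⊆ M \ S := by
        intro x hx
        have := hTX hx
        simp only [hXdef, Finset.mem_union, Finset.mem_singleton] at this
        rcases this with h | h
        · exact h
        · exact absurd (h ▸ hx) hgT
      apply hcut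
      refine ⟨T, hTM, hTacc, ?_⟩
      unfold Acceptable
      rw [Finset.sdiff_sdiff_eq_self hTM]
      have hSMT : S ⊆ M \ T := by
        intro x hx
        refine Finset.mem_sdiff.2 ⟨hSM hx, fun hxT => ?_⟩
        have := hTMS hxT
        exact (Finset.mem_sdiff.1 this).2 hx
      have h1 : v S ≤ v (M \ T) := hmono S (M \ T) hSMT Finset.sdiff_subset
      have h2 : v T ≤ v (M \ S) := hmono T (M \ S) hTMS Finset.sdiff_subset
      have h3 : c * v (M \ S) ≤ v S := hSacc
      nlinarith
    exact ⟨T, fun _ => ⟨⟨hTM, hTacc, hTmin⟩, hgT, hTX⟩⟩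
  choose f hf using key
  -- the target set as a finset
  set F : Finset (Finset ι) := M.powerset.filter
    (fun T => CMinimal M v c T ∧ ∃ g ∈ S, T ⊆ (M \ S) ∪ {g}) with hF
  have hset : {T : Finset ι | CMinimal M v c T ∧ ∃ g ∈ S, T ⊆ (M \ S) ∪ {g}} = ↑F := by
    ext T
    simp only [hF, Set.mem_setOf_eq, Finset.coe_filter, Finset.mem_powerset]
    exact ⟨fun h => ⟨h.1.1, h⟩, fun h => h.2⟩
  rw [hset, Set.ncard_coe_finset]
  apply Finset.card_le_card_of_injOn f
  · intro g hg
    obtain ⟨hmin, hgT, hsub⟩ := hf g hg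
    simp only [hF, Finset.mem_coe, Finset.mem_filter, Finset.mem_powerset]
    exact ⟨hmin.1, hmin, g, hg, hsub⟩
  · intro g1 hg1 g2 hg2 heq
    simp only [Finset.mem_coe] at hg1 hg2
    obtain ⟨_, hg1T, _⟩ := hf g1 hg1
    obtain ⟨_, _, hsub2⟩ := hf g2 hg2
    have : g1 ∈ (M \ S) ∪ {g2} := hsub2 (heq ▸ hg1T)
    simp only [Finset.mem_union, Finset.mem_sdiff, Finset.mem_singleton] at this
    rcases this with h | h
    · exact absurd hg1 h.2
    · exact h
end

section
/- Let v be a monotone submodular valuation on a finite set M of items with v(M) = 1, and let c ∈ [0, 1) be a real number. Assume the cut-failed condition holds. Let E be the set of ordered pairs (S, T) of c-minimal bundles such that there exists g ∈ S with T ⊆ (M\S) ∪ {g}, and let E₊ be the set of pairs (S, T) ∈ E for which every g ∈ S with T ⊆ (M\S) ∪ {g} satisfies v(S) − v(S\{g}) ≥ (1 − c)/2. Then 2·|E₊| ≥ |E|. -/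
section Aux
variable {ι : Type*} [DecidableEq ι]

lemma submod_lattice (M : Finset ι) (v : Finset ι → ℝ)
    (hsubmod : ∀ S T : Finset ι, S ⊆ T → T ⊆ M → ∀ g ∈ M,
      v (T ∪ {g}) - v T ≤ v (S ∪ {g}) - v S) :
    ∀ (n : ℕ) (A B : Finset ι), (B \ A).card = n → A ⊆ M → B ⊆ M →
      v (A ∪ B) + v (A ∩ B) ≤ v A + v B := by
  intro n
  induction n with
  | zero =>
    intro A B hcard hA hB
    have hBA : B ⊆ A := by
      intro x hx
      by_contra hxA
      have hmem : x ∈ B \ A := Finset.mem_sdiff.mpr ⟨hx, hxA⟩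
      have hemp := Finset.card_eq_zero.mp hcard
      rw [hemp] at hmem
      exact absurd hmem (Finset.notMem_empty x)
    rw [Finset.union_eq_left.mpr hBA, Finset.inter_eq_right.mpr hBA]
  | succ n ih =>
    intro A B hcard hA hB
    have hne : (B \ A).Nonempty := by
      rw [← Finset.card_pos, hcard]; omega
    obtain ⟨g, hg⟩ := hne
    have hgB : g ∈ B := (Finset.mem_sdiff.mp hg).1
    have hgA : g ∉ A := (Finset.mem_sdiff.mp hg).2
    have hgM : g ∈ M := hB hgB
    have hcard' : (B \ (A ∪ {g})).card = n := by
      have hEq : B \ (A ∪ {g}) = (B \ A).erase g := by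
        ext x
        simp only [Finset.mem_sdiff, Finset.mem_union, Finset.mem_erase,
          Finset.mem_singleton]
        tauto
      rw [hEq, Finset.card_erase_of_mem hg, hcard]; omega
    have h1 := ih (A ∪ {g}) B hcard' (Finset.union_subset hA
      (Finset.singleton_subset_iff.mpr hgM)) hB
    have e1 : (A ∪ {g}) ∪ B = A ∪ B := by
      ext x
      simp only [Finset.mem_union, Finset.mem_singleton]
      constructor
      · rintro ((h | h) | h) <;> [exact Or.inl h; exact Or.inr (h ▸ hgB); exact Or.inr h]
      · rintro (h | h) <;> [exact Or.inl (Or.inl h); exact Or.inr h]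
    have e2 : (A ∪ {g}) ∩ B = (A ∩ B) ∪ {g} := by
      ext x
      simp only [Finset.mem_inter, Finset.mem_union, Finset.mem_singleton]
      constructor
      · rintro ⟨h | h, hb⟩ <;> [exact Or.inl ⟨h, hb⟩; exact Or.inr h]
      · rintro (⟨h, hb⟩ | h)
        · exact ⟨Or.inl h, hb⟩
        · exact ⟨Or.inr h, h ▸ hgB⟩
    rw [e1, e2] at h1
    have h2 := hsubmod (A ∩ B) A Finset.inter_subset_left hA g hgM
    linarith

end Aux

/-- For a monotone submodular valuation with `v M = 1` and `c ∈ [0,1)`, under the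
cut-failed condition, at least half of the edges of the minimal bundle graph are
special: `2 * |E₊| ≥ |E|`. -/
theorem e_plus_size {ι : Type*} [DecidableEq ι] (M : Finset ι)
    (v : Finset ι → ℝ) (h0 : v ∅ = 0)
    (hmono : ∀ S T : Finset ι, S ⊆ T → T ⊆ M → v S ≤ v T)
    (hsubmod : ∀ S T : Finset ι, S ⊆ T → T ⊆ M → ∀ g ∈ M,
      v (T ∪ {g}) - v T ≤ v (S ∪ {g}) - v S)
    (hM : v M = 1) (c : ℝ) (hc0 : 0 ≤ c) (hc1 : c < 1)
    (hcut : CutFailed M v c) :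
    2 * {p : Finset ι × Finset ι |
          (CMinimal M v c p.1 ∧ CMinimal M v c p.2 ∧
            ∃ g ∈ p.1, p.2 ⊆ (M \ p.1) ∪ {g}) ∧
          ∀ g ∈ p.1, p.2 ⊆ (M \ p.1) ∪ {g} →
            v p.1 - v (p.1 \ {g}) ≥ (1 - c) / 2}.ncard ≥
      {p : Finset ι × Finset ι |
          CMinimal M v c p.1 ∧ CMinimal M v c p.2 ∧
            ∃ g ∈ p.1, p.2 ⊆ (M \ p.1) ∪ {g}}.ncard := by
  classical
  -- basic derived facts
  have hvnn : ∀ X : Finset ι, X ⊆ M → 0 ≤ v X := by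
    intro X hX
    have := hmono ∅ X (Finset.empty_subset X) hX
    linarith
  have hcpos : 0 < c := by
    rcases lt_or_eq_of_le hc0 with h | h
    · exact h
    · exfalso
      apply hcut
      refine ⟨∅, Finset.empty_subset M, ?_, ?_⟩
      · show v ∅ ≥ c * v (M \ ∅)
        rw [h0, ← h]; simp
      · show v (M \ ∅) ≥ c * v (M \ (M \ ∅))
        rw [Finset.sdiff_empty, Finset.sdiff_self, hM, h0, ← h]; simp
  have hsuper : ∀ X : Finset ι, X ⊆ M → 1 ≤ v X + v (M \ X) := by
    intro X hX
    have h := submod_lattice M v hsubmod ((M \ X) \ X).card X (M \ X) rfl hX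
      Finset.sdiff_subset
    rw [Finset.union_sdiff_of_subset hX, Finset.inter_sdiff_self, h0, hM] at h
    linarith
  -- cut-failed consequence
  have hcf : ∀ X : Finset ι, X ⊆ M → Acceptable M v c X → v (M \ X) < c * v X := by
    intro X hX hacc
    by_contra h
    push_neg at h
    apply hcut
    refine ⟨X, hX, hacc, ?_⟩
    show v (M \ X) ≥ c * v (M \ (M \ X))
    rwa [Finset.sdiff_sdiff_self_left, Finset.inter_eq_right.mpr hX]
  -- any witness of an edge lies in both bundles
  have hwit : ∀ S T : Finset ι, CMinimal M v c S → CMinimal M v c T →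
      ∀ g ∈ S, T ⊆ (M \ S) ∪ {g} → g ∈ T := by
    intro S T hS hT g hgS hTsub
    by_contra hgT
    have hSM : S ⊆ M := hS.1
    have hTM : T ⊆ M := hT.1
    have hTMS : T ⊆ M \ S := by
      intro x hx
      rcases Finset.mem_union.mp (hTsub hx) with h | h
      · exact h
      · exact absurd (Finset.mem_singleton.mp h ▸ hx) hgT
    have hSMT : S ⊆ M \ T := by
      intro x hx
      refine Finset.mem_sdiff.mpr ⟨hSM hx, fun hxT => ?_⟩
      exact absurd hx (Finset.mem_sdiff.mp (hTMS hxT)).2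
    have hma : v (M \ S) < c * v S := hcf S hSM hS.2.1
    have hmt : v (M \ T) < c * v T := hcf T hTM hT.2.1
    have h1 : v T ≤ v (M \ S) := hmono T (M \ S) hTMS Finset.sdiff_subset
    have h2 : v S ≤ v (M \ T) := hmono S (M \ T) hSMT Finset.sdiff_subset
    have ha0 : 0 ≤ v S := hvnn S hSM
    have ht0 : 0 ≤ v T := hvnn T hTM
    -- v S < c * v T < c * c * v S ≤ v S, contradiction
    have k1 : v S < c * v T := lt_of_le_of_lt h2 hmt
    have k2 : v T < c * v S := lt_of_le_of_lt h1 hma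
    nlinarith
  -- the key marginal bound for the swapped edge
  have hkey : ∀ S T : Finset ι, CMinimal M v c S → CMinimal M v c T →
      ∀ g ∈ S, g ∈ T → T ⊆ (M \ S) ∪ {g} →
      v S - v (S \ {g}) < (1 - c) / 2 → v T - v (T \ {g}) ≥ (1 - c) / 2 := by
    intro S T hS hT g hgS hgT hTsub hbad
    have hSM : S ⊆ M := hS.1
    have hTM : T ⊆ M := hT.1
    have hgM : g ∈ M := hSM hgS
    set a := v S with ha
    set b := v (S \ {g}) with hb
    set m := v (M \ S) with hm
    set q := v ((M \ S) ∪ {g}) with hq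
    set t := v T with htd
    set t' := v (T \ {g}) with ht'
    -- M \ (S \ {g}) = (M \ S) ∪ {g}
    have hset : M \ (S \ {g}) = (M \ S) ∪ {g} := by
      ext x
      simp only [Finset.mem_sdiff, Finset.mem_union, Finset.mem_singleton]
      constructor
      · rintro ⟨hxM, hx⟩
        by_cases hxg : x = g
        · exact Or.inr hxg
        · exact Or.inl ⟨hxM, fun hxS => hx ⟨hxS, hxg⟩⟩
      · rintro (⟨hxM, hxS⟩ | h)
        · exact ⟨hxM, fun hc => hxS hc.1⟩
        · exact ⟨h ▸ hgM, fun hc => hc.2 h⟩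
    -- minimality of S at g
    have hbq : b < c * q := by
      have := hS.2.2 g hgS
      unfold Acceptable at this
      push_neg at this
      rwa [hset] at this
    -- superadditivity of complements for S \ {g}
    have hsupb : 1 ≤ b + q := by
      have := hsuper (S \ {g}) (Finset.sdiff_subset.trans hSM)
      rwa [hset] at this
    -- cut-failed for S
    have hma : m < c * a := hcf S hSM hS.2.1
    -- the submodularity step: t - t' ≥ q - m
    have hsub1 : T \ {g} ⊆ M \ S := by
      intro x hx
      obtain ⟨hxT, hxg⟩ := Finset.mem_sdiff.mp hx
      rcases Finset.mem_union.mp (hTsub hxT) with h | h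
      · exact h
      · exact absurd h hxg
    have hstep : q - m ≤ t - t' := by
      have h := hsubmod (T \ {g}) (M \ S) hsub1 Finset.sdiff_subset g hgM
      have e : (T \ {g}) ∪ {g} = T := by
        ext x
        simp only [Finset.mem_union, Finset.mem_sdiff, Finset.mem_singleton]
        constructor
        · rintro (⟨h1, _⟩ | h1)
          · exact h1
          · exact h1 ▸ hgT
        · intro hx
          by_cases hxg : x = g
          · exact Or.inr hxg
          · exact Or.inl ⟨hx, hxg⟩
      rw [e] at h
      linarith
    -- numeric chain
    have k1 : c * b < c * (c * q) := by
      exact mul_lt_mul_of_pos_left hbq hcpos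
    have k2 : c * a < c * (b + (1 - c) / 2) := by
      apply mul_lt_mul_of_pos_left _ hcpos
      linarith
    have k3 : 0 ≤ (1 - c) * ((1 + c) * q - 1) :=
      mul_nonneg (by linarith) (by nlinarith)
    nlinarith [sq_nonneg (1 - c)]
  -- set up the counting argument
  set E : Set (Finset ι × Finset ι) :=
    {p : Finset ι × Finset ι |
      CMinimal M v c p.1 ∧ CMinimal M v c p.2 ∧
        ∃ g ∈ p.1, p.2 ⊆ (M \ p.1) ∪ {g}} with hE
  set Ep : Set (Finset ι × Finset ι) :=
    {p : Finset ι × Finset ι |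
      (CMinimal M v c p.1 ∧ CMinimal M v c p.2 ∧
        ∃ g ∈ p.1, p.2 ⊆ (M \ p.1) ∪ {g}) ∧
      ∀ g ∈ p.1, p.2 ⊆ (M \ p.1) ∪ {g} →
        v p.1 - v (p.1 \ {g}) ≥ (1 - c) / 2} with hEp
  have hEfin : E.Finite := by
    apply Set.Finite.subset (Finset.finite_toSet (M.powerset ×ˢ M.powerset))
    intro p hp
    simp only [Finset.coe_product, Set.mem_prod, Finset.mem_coe,
      Finset.mem_powerset]
    exact ⟨hp.1.1, hp.2.1.1⟩
  have hsubEp : Ep ⊆ E := fun p hp => hp.1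
  have hEpfin : Ep.Finite := hEfin.subset hsubEp
  -- the swap map sends bad edges to good edges
  have hswap : ∀ p ∈ E \ Ep, Prod.swap p ∈ Ep := by
    rintro ⟨S, T⟩ ⟨hpE, hpN⟩
    obtain ⟨hS, hT, g0, hg0S, hTsub0⟩ := hpE
    -- extract a bad witness
    have hbadex : ∃ g ∈ S, T ⊆ (M \ S) ∪ {g} ∧ v S - v (S \ {g}) < (1 - c) / 2 := by
      by_contra hno
      push_neg at hno
      apply hpN
      refine ⟨⟨hS, hT, g0, hg0S, hTsub0⟩, ?_⟩
      intro g hg hsubg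
      by_contra hlt
      push_neg at hlt
      exact absurd hlt (not_lt.mpr (hno g hg hsubg))
    obtain ⟨g, hgS, hTsub, hbad⟩ := hbadex
    have hgT : g ∈ T := hwit S T hS hT g hgS hTsub
    have hSsub : S ⊆ (M \ T) ∪ {g} := by
      intro x hx
      by_cases hxT : x ∈ T
      · have : x ∈ (M \ S) ∪ {g} := hTsub hxT
        rcases Finset.mem_union.mp this with h | h
        · exact absurd hx (Finset.mem_sdiff.mp h).2
        · exact Finset.mem_union_right _ h
      · exact Finset.mem_union_left _ (Finset.mem_sdiff.mpr ⟨hS.1 hx, hxT⟩)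
    refine ⟨⟨hT, hS, g, hgT, hSsub⟩, ?_⟩
    intro g' hg'T hsubg'
    -- the witness is unique: g ∈ S ∩ T forces g' = g
    have hgg' : g' = g := by
      have : g ∈ (M \ T) ∪ {g'} := hsubg' hgS
      rcases Finset.mem_union.mp this with h | h
      · exact absurd hgT (Finset.mem_sdiff.mp h).2
      · exact (Finset.mem_singleton.mp h).symm
    rw [hgg']
    exact hkey S T hS hT g hgS hgT hTsub hbad
  -- counting
  have hinj : Set.InjOn Prod.swap (E \ Ep) :=
    fun p _ q _ h => Prod.swap_injective h
  have h1 : (E \ Ep).ncard ≤ Ep.ncard :=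
    Set.ncard_le_ncard_of_injOn Prod.swap hswap hinj hEpfin
  have h2 : (E \ Ep).ncard + Ep.ncard = E.ncard :=
    Set.ncard_diff_add_ncard_of_subset hsubEp hEfin
  omega
end

section
/- Let v be a monotone submodular valuation on a finite set M of m items with v(M) = 1, and let c ∈ [0, 1) be a real number. Assume the cut-failed condition holds. Then the number of c-minimal bundles is strictly less than 2·(m+1)^(8/(1−c)), where the exponentiation is real-valued. -/
private lemma choose_le_pow_aux : ∀ (m j : ℕ), m.choose j ≤ m ^ j := by
  intro m
  induction m with
  | zero =>
    intro j
    cases j with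
    | zero => simp
    | succ j => simp [Nat.choose]
  | succ m ih =>
    intro j
    cases j with
    | zero => simp
    | succ j =>
      rw [Nat.choose_succ_succ]
      have h1 : m ^ j ≤ (m + 1) ^ j := Nat.pow_le_pow_left (Nat.le_succ m) j
      have h2 : m ^ (j + 1) ≤ m * (m + 1) ^ j := by
        calc m ^ (j + 1) = m * m ^ j := by ring
        _ ≤ m * (m + 1) ^ j := Nat.mul_le_mul_left m h1
      calc m.choose j + m.choose (j + 1) ≤ m ^ j + m ^ (j + 1) :=
            Nat.add_le_add (ih j) (ih (j + 1))
      _ ≤ (m + 1) ^ j + m * (m + 1) ^ j := Nat.add_le_add h1 h2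
      _ = (m + 1) ^ (j + 1) := by ring

private lemma sum_choose_le_aux (m K : ℕ) :
    ∑ i ∈ Finset.range (K + 1), m.choose i ≤ (m + 1) ^ K := by
  induction K with
  | zero => simp
  | succ K ih =>
    rw [Finset.sum_range_succ]
    have h2 : m.choose (K + 1) ≤ m * (m + 1) ^ K := by
      calc m.choose (K + 1) ≤ m ^ (K + 1) := choose_le_pow_aux m (K + 1)
      _ = m * m ^ K := by ring
      _ ≤ m * (m + 1) ^ K := Nat.mul_le_mul_left m (Nat.pow_le_pow_left (Nat.le_succ m) K)
    calc (∑ i ∈ Finset.range (K + 1), m.choose i) + m.choose (K + 1)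
        ≤ (m + 1) ^ K + m * (m + 1) ^ K := Nat.add_le_add ih h2
    _ = (m + 1) ^ (K + 1) := by ring

private lemma card_small_subsets {ι : Type*} [DecidableEq ι] (M : Finset ι) (K : ℕ) :
    (M.powerset.filter (fun A => A.card ≤ K)).card ≤ (M.card + 1) ^ K := by
  classical
  have hsub : M.powerset.filter (fun A => A.card ≤ K) ⊆
      (Finset.range (K + 1)).biUnion (fun i => M.powersetCard i) := by
    intro A hA
    simp only [Finset.mem_filter, Finset.mem_powerset] at hA
    refine Finset.mem_biUnion.mpr ⟨A.card, Finset.mem_range.mpr (Nat.lt_succ_of_le hA.2), ?_⟩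
    exact Finset.mem_powersetCard.mpr ⟨hA.1, rfl⟩
  calc (M.powerset.filter (fun A => A.card ≤ K)).card
      ≤ ((Finset.range (K + 1)).biUnion (fun i => M.powersetCard i)).card :=
        Finset.card_le_card hsub
  _ ≤ ∑ i ∈ Finset.range (K + 1), (M.powersetCard i).card := Finset.card_biUnion_le
  _ = ∑ i ∈ Finset.range (K + 1), M.card.choose i := by
        simp [Finset.card_powersetCard]
  _ ≤ (M.card + 1) ^ K := sum_choose_le_aux M.card K

/-- For a monotone submodular valuation on `m` items with `v M = 1` and `c ∈ [0,1)`,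
under the cut-failed condition, the number of `c`-minimal bundles is strictly less
than `2 * (m + 1) ^ (8 / (1 - c))` (real exponentiation). -/
theorem minimal_bundle_count {ι : Type*} [DecidableEq ι] (M : Finset ι)
    (v : Finset ι → ℝ) (h0 : v ∅ = 0)
    (hmono : ∀ S T : Finset ι, S ⊆ T → T ⊆ M → v S ≤ v T)
    (hsubmod : ∀ S T : Finset ι, S ⊆ T → T ⊆ M → ∀ g ∈ M,
      v (T ∪ {g}) - v T ≤ v (S ∪ {g}) - v S)
    (hM : v M = 1) (c : ℝ) (hc0 : 0 ≤ c) (hc1 : c < 1)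
    (hcut : CutFailed M v c) :
    ({S : Finset ι | CMinimal M v c S}.ncard : ℝ) <
      2 * ((M.card : ℝ) + 1) ^ ((8 : ℝ) / (1 - c)) := by
  classical
  set ε : ℝ := 1 - c with hεdef
  have hε : 0 < ε := by simp only [hεdef]; linarith
  set θ : ℝ := ε / 4 with hθdef
  have hθ : 0 < θ := by positivity
  set K : ℕ := ⌊(4 : ℝ) / ε⌋₊ with hKdef
  -- basic facts
  have hvnn : ∀ A : Finset ι, A ⊆ M → 0 ≤ v A := by
    intro A hA
    have := hmono ∅ A (Finset.empty_subset A) hA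
    linarith [this, h0.ge, h0.le]
  have hv1 : ∀ A : Finset ι, A ⊆ M → v A ≤ 1 := by
    intro A hA
    have := hmono A M hA (Finset.Subset.refl M)
    linarith [hM.le]
  -- subadditivity
  have subadd : ∀ B : Finset ι, B ⊆ M → ∀ A : Finset ι, A ⊆ M → v (A ∪ B) ≤ v A + v B := by
    intro B
    induction B using Finset.induction_on with
    | empty => intro _ A hA; simp [h0]
    | @insert b B hb ih =>
      intro hBM A hA
      have hbM : b ∈ M := hBM (Finset.mem_insert_self b B)
      have hBM' : B ⊆ M := (Finset.subset_insert b B).trans hBM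
      have hkey : v ((A ∪ B) ∪ {b}) - v (A ∪ B) ≤ v (B ∪ {b}) - v B :=
        hsubmod B (A ∪ B) Finset.subset_union_right (Finset.union_subset hA hBM') b hbM
      have e1 : (A ∪ B) ∪ {b} = A ∪ insert b B := by
        ext x
        simp only [Finset.mem_union, Finset.mem_insert, Finset.mem_singleton]
        tauto
      have e2 : B ∪ {b} = insert b B := by
        ext x
        simp only [Finset.mem_union, Finset.mem_insert, Finset.mem_singleton]
        tauto
      rw [e1, e2] at hkey
      have := ih hBM' A hA
      linarith
  -- cover lemma
  have cover : ∀ X : Finset ι, X ⊆ M → ∃ P : Finset ι, P ⊆ X ∧ P.card ≤ K ∧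
      ∀ g ∈ X, g ∉ P → v (P ∪ {g}) - v P < θ := by
    intro X hX
    set F := X.powerset.filter (fun P => θ * P.card ≤ v P) with hF
    have hne : F.Nonempty := by
      refine ⟨∅, Finset.mem_filter.mpr ⟨Finset.mem_powerset.mpr (Finset.empty_subset X), ?_⟩⟩
      simp [h0]
    obtain ⟨P, hPF, hPmax⟩ := F.exists_max_image (fun P => P.card) hne
    have hPX : P ⊆ X := Finset.mem_powerset.mp (Finset.mem_filter.mp hPF).1
    have hPv : θ * P.card ≤ v P := (Finset.mem_filter.mp hPF).2
    refine ⟨P, hPX, ?_, ?_⟩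
    · have h1 : v P ≤ 1 := hv1 P (hPX.trans hX)
      have h2 : θ * P.card ≤ 1 := hPv.trans h1
      apply Nat.le_floor
      rw [le_div_iff₀ hε]
      have : θ = ε / 4 := hθdef
      nlinarith
    · intro g hgX hgP
      by_contra hcon
      push_neg at hcon
      have hins : insert g P ∈ F := by
        refine Finset.mem_filter.mpr ⟨Finset.mem_powerset.mpr ?_, ?_⟩
        · exact Finset.insert_subset hgX hPX
        · have hcard : (insert g P).card = P.card + 1 := Finset.card_insert_of_notMem hgP
          have hPg : P ∪ {g} = insert g P := by
            ext x
            simp only [Finset.mem_union, Finset.mem_insert, Finset.mem_singleton]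
            tauto
          rw [hcard]
          push_cast
          rw [← hPg]
          nlinarith [hcon, hPv]
      have := hPmax _ hins
      rw [Finset.card_insert_of_notMem hgP] at this
      omega
  -- value facts for minimal bundles
  have hSfacts : ∀ S : Finset ι, CMinimal M v c S →
      (1 : ℝ) ≤ (1 + c) * v S ∧ v (M \ S) < c * v S := by
    intro S hS
    obtain ⟨hSM, hSacc, _⟩ := hS
    have hcomp : ¬ Acceptable M v c (M \ S) := fun hacc => hcut ⟨S, hSM, hSacc, hacc⟩
    have hMS : M \ (M \ S) = S := by
      ext x
      simp only [Finset.mem_sdiff]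
      constructor
      · rintro ⟨hxM, hx⟩
        by_contra hxS
        exact hx ⟨hxM, hxS⟩
      · intro hxS
        exact ⟨hSM hxS, fun h => h.2 hxS⟩
    have hb : v (M \ S) < c * v S := by
      unfold Acceptable at hcomp
      push_neg at hcomp
      rwa [hMS] at hcomp
    refine ⟨?_, hb⟩
    have hsplit : v M ≤ v S + v (M \ S) := by
      have hUnion : S ∪ M \ S = M := Finset.union_sdiff_of_subset hSM
      calc v M = v (S ∪ M \ S) := by rw [hUnion]
      _ ≤ v S + v (M \ S) := subadd (M \ S) (Finset.sdiff_subset) S hSM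
    rw [hM] at hsplit
    nlinarith
  -- injectivity core lemma
  have inj_aux : ∀ S S' P Q : Finset ι, CMinimal M v c S → CMinimal M v c S' →
      P ⊆ S → P ⊆ S' → (∀ g ∈ S, g ∉ P → v (P ∪ {g}) - v P < θ) →
      Q ⊆ M \ S → (∀ h ∈ M \ S', h ∉ Q → v (Q ∪ {h}) - v Q < θ) →
      ∀ g, g ∈ S → g ∉ S' → False := by
    intro S S' P Q hS hS' hPS hPS' hPcov hQS hQcov' g hgS hgS'
    obtain ⟨hvS1, hb⟩ := hSfacts S hS
    obtain ⟨hSM, hSacc, hSmin⟩ := hS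
    have hgM : g ∈ M := hSM hgS
    have hgP : g ∉ P := fun h => hgS' (hPS' h)
    -- marginal of g over S \ {g} is below θ
    have hPSg : P ⊆ S \ {g} := by
      intro x hx
      rw [Finset.mem_sdiff, Finset.mem_singleton]
      exact ⟨hPS hx, fun hxg => hgP (hxg ▸ hx)⟩
    have hsub1 : v ((S \ {g}) ∪ {g}) - v (S \ {g}) ≤ v (P ∪ {g}) - v P :=
      hsubmod P (S \ {g}) hPSg (Finset.sdiff_subset.trans hSM) g hgM
    have hSg : (S \ {g}) ∪ {g} = S :=
      Finset.sdiff_union_of_subset (Finset.singleton_subset_iff.mpr hgS)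
    rw [hSg] at hsub1
    have hμ : v S - v (S \ {g}) < θ := lt_of_le_of_lt hsub1 (hPcov g hgS hgP)
    -- g is not removable: S \ {g} unacceptable
    have hnot : ¬ Acceptable M v c (S \ {g}) := hSmin g hgS
    unfold Acceptable at hnot
    push_neg at hnot
    have hid : M \ (S \ {g}) = (M \ S) ∪ {g} := by
      ext x
      simp only [Finset.mem_sdiff, Finset.mem_union, Finset.mem_singleton]
      constructor
      · rintro ⟨hxM, hx⟩
        by_cases hxg : x = g
        · exact Or.inr hxg
        · refine Or.inl ⟨hxM, fun hxS => ?_⟩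
          exact hx ⟨hxS, hxg⟩
      · rintro (⟨hxM, hxS⟩ | rfl)
        · exact ⟨hxM, fun h => hxS h.1⟩
        · exact ⟨hgM, fun h => h.2 rfl⟩
    rw [hid] at hnot
    -- ν := marginal of g over M \ S
    set ν : ℝ := v ((M \ S) ∪ {g}) - v (M \ S) with hνdef
    have hνnn : 0 ≤ ν := by
      have hsubM : (M \ S) ∪ {g} ⊆ M := by
        apply Finset.union_subset Finset.sdiff_subset
        simpa using hgM
      have := hmono (M \ S) ((M \ S) ∪ {g}) Finset.subset_union_left hsubM
      simp only [hνdef]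
      linarith
    -- from minimality: c * ν > 3θ
    have hε4 : ε ≤ (1 - c ^ 2) * v S := by
      have : (0 : ℝ) < 1 - c := hε
      nlinarith [hvS1]
    have hcν : 3 * θ < c * ν := by
      have h1 : v (S \ {g}) < c * (v (M \ S) + ν) := by
        simp only [hνdef]
        nlinarith [hnot]
      have h2 : c * v (M \ S) ≤ c * (c * v S) := mul_le_mul_of_nonneg_left hb.le hc0
      have h3 : v S - θ < v (S \ {g}) := by linarith
      have hθε : θ = ε / 4 := hθdef
      nlinarith
    have hν3 : 3 * θ < ν := by nlinarith
    -- but marginal of g over Q is below θ, and Q ⊆ M \ S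
    have hgQ : g ∉ Q := by
      intro h
      have := hQS h
      rw [Finset.mem_sdiff] at this
      exact this.2 hgS
    have hgMS' : g ∈ M \ S' := Finset.mem_sdiff.mpr ⟨hgM, hgS'⟩
    have hsmall : v (Q ∪ {g}) - v Q < θ := hQcov' g hgMS' hgQ
    have hsub2 : ν ≤ v (Q ∪ {g}) - v Q :=
      hsubmod Q (M \ S) hQS Finset.sdiff_subset g hgM
    linarith
  -- encode each minimal bundle
  have enc_ex : ∀ S : Finset ι, CMinimal M v c S → ∃ PQ : Finset ι × Finset ι,
      PQ.1 ⊆ S ∧ PQ.2 ⊆ M \ S ∧ PQ.1.card ≤ K ∧ PQ.2.card ≤ K ∧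
      (∀ g ∈ S, g ∉ PQ.1 → v (PQ.1 ∪ {g}) - v PQ.1 < θ) ∧
      (∀ h ∈ M \ S, h ∉ PQ.2 → v (PQ.2 ∪ {h}) - v PQ.2 < θ) := by
    intro S hS
    obtain ⟨P, hP1, hP2, hP3⟩ := cover S hS.1
    obtain ⟨Q, hQ1, hQ2, hQ3⟩ := cover (M \ S) Finset.sdiff_subset
    exact ⟨(P, Q), hP1, hQ1, hP2, hQ2, hP3, hQ3⟩
  set f : Finset ι → Finset ι × Finset ι := fun S =>
    if h : CMinimal M v c S then (enc_ex S h).choose else (∅, ∅) with hfdef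
  set SF : Finset (Finset ι) := M.powerset.filter (fun S => CMinimal M v c S) with hSF
  set N : Finset (Finset ι) := M.powerset.filter (fun A => A.card ≤ K) with hN
  set B : Finset (Finset ι × Finset ι) := N ×ˢ N with hB
  have hmaps : ∀ S ∈ SF, f S ∈ B := by
    intro S hSmem
    have hS : CMinimal M v c S := (Finset.mem_filter.mp hSmem).2
    simp only [hfdef, dif_pos hS]
    obtain ⟨hP1, hQ1, hP2, hQ2, _, _⟩ := (enc_ex S hS).choose_spec
    refine Finset.mem_product.mpr ⟨?_, ?_⟩
    · exact Finset.mem_filter.mpr ⟨Finset.mem_powerset.mpr (hP1.trans hS.1), hP2⟩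
    · exact Finset.mem_filter.mpr ⟨Finset.mem_powerset.mpr (hQ1.trans Finset.sdiff_subset), hQ2⟩
  have hinj : Set.InjOn f ↑SF := by
    intro S hSmem S' hSmem' hfeq
    have hS : CMinimal M v c S := (Finset.mem_filter.mp (Finset.mem_coe.mp hSmem)).2
    have hS' : CMinimal M v c S' := (Finset.mem_filter.mp (Finset.mem_coe.mp hSmem')).2
    simp only [hfdef, dif_pos hS, dif_pos hS'] at hfeq
    obtain ⟨hP1, hQ1, _, _, hPcov, hQcov⟩ := (enc_ex S hS).choose_spec
    obtain ⟨hP1', hQ1', _, _, hPcov', hQcov'⟩ := (enc_ex S' hS').choose_spec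
    have heqP : (enc_ex S' hS').choose.1 = (enc_ex S hS).choose.1 := by rw [hfeq]
    have heqQ : (enc_ex S' hS').choose.2 = (enc_ex S hS).choose.2 := by rw [hfeq]
    rw [heqP] at hP1' hPcov'
    rw [heqQ] at hQ1' hQcov'
    apply Finset.Subset.antisymm
    · intro g hgS
      by_contra hgS'
      exact inj_aux S S' (enc_ex S hS).choose.1 (enc_ex S hS).choose.2 hS hS'
        hP1 hP1' hPcov hQ1 hQcov' g hgS hgS'
    · intro g hgS'
      by_contra hgS
      exact inj_aux S' S (enc_ex S hS).choose.1 (enc_ex S hS).choose.2 hS' hS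
        hP1' hP1 hPcov' hQ1' hQcov g hgS' hgS
  have hcard1 : SF.card ≤ B.card := Finset.card_le_card_of_injOn f hmaps hinj
  have hcard2 : B.card ≤ (M.card + 1) ^ K * (M.card + 1) ^ K := by
    rw [hB, Finset.card_product]
    exact Nat.mul_le_mul (card_small_subsets M K) (card_small_subsets M K)
  have hncard : {S : Finset ι | CMinimal M v c S}.ncard = SF.card := by
    have hset : {S : Finset ι | CMinimal M v c S} = ↑SF := by
      ext S
      simp only [Set.mem_setOf_eq, hSF, Finset.coe_filter, Finset.mem_powerset,
        Set.mem_setOf_eq]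
      exact ⟨fun h => ⟨h.1, h⟩, fun h => h.2⟩
    rw [hset, Set.ncard_coe_finset]
  -- final arithmetic
  have hKle : (2 * K : ℝ) ≤ 8 / (1 - c) := by
    have h1 : (K : ℝ) ≤ 4 / ε := Nat.floor_le (by positivity)
    have : (8 : ℝ) / (1 - c) = 2 * (4 / ε) := by
      rw [hεdef]
      ring
    rw [this]
    linarith
  have hbase1 : (1 : ℝ) ≤ (M.card : ℝ) + 1 := by
    have : (0 : ℝ) ≤ (M.card : ℝ) := Nat.cast_nonneg _
    linarith
  have hchain : ({S : Finset ι | CMinimal M v c S}.ncard : ℝ) ≤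
      ((M.card : ℝ) + 1) ^ ((8 : ℝ) / (1 - c)) := by
    rw [hncard]
    calc (SF.card : ℝ) ≤ ((M.card + 1) ^ K * (M.card + 1) ^ K : ℕ) := by
          exact_mod_cast hcard1.trans hcard2
    _ = ((M.card : ℝ) + 1) ^ (2 * K : ℕ) := by
          push_cast
          ring
    _ = ((M.card : ℝ) + 1) ^ ((2 * K : ℕ) : ℝ) := (Real.rpow_natCast _ _).symm
    _ ≤ ((M.card : ℝ) + 1) ^ ((8 : ℝ) / (1 - c)) := by
          apply Real.rpow_le_rpow_of_exponent_le hbase1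
          exact_mod_cast hKle
  have hpos : (0 : ℝ) < ((M.card : ℝ) + 1) ^ ((8 : ℝ) / (1 - c)) := by
    apply Real.rpow_pos_of_pos
    have : (0 : ℝ) ≤ (M.card : ℝ) := Nat.cast_nonneg _
    linarith
  have hgoal : ε = 1 - c := hεdef
  rw [show (8 : ℝ) / ε = (8 : ℝ) / (1 - c) from by rw [hgoal]] at *
  linarith
end

section
/- Let v be a subadditive valuation on a finite set M of items, let α be a real number with 0 < α ≤ 1/2, and let S be a nonempty subset of M such that α·v(S) > v(M\S) and, for every g ∈ S, α·v((M\S) ∪ {g}) > v(S\{g}). Then for every g ∈ S, v({g}) ≥ α·v(M\{g}). -/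
/-- For a subadditive valuation `v` on `M`, `0 < α ≤ 1/2`, and a nonempty `S ⊆ M`
with `α * v S > v (M \ S)` and `α * v ((M \ S) ∪ {g}) > v (S \ {g})` for every
`g ∈ S`, every `g ∈ S` satisfies `v {g} ≥ α * v (M \ {g})`. -/
theorem single_item_dominates {ι : Type*} [DecidableEq ι] (M : Finset ι)
    (v : Finset ι → ℝ) (h0 : v ∅ = 0)
    (hsub : ∀ S T : Finset ι, S ⊆ M → T ⊆ M → v (S ∪ T) ≤ v S + v T)
    (α : ℝ) (hα0 : 0 < α) (hα1 : α ≤ 1 / 2)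
    (S : Finset ι) (hS : S ⊆ M) (hne : S.Nonempty)
    (h1 : α * v S > v (M \ S))
    (h2 : ∀ g ∈ S, α * v ((M \ S) ∪ {g}) > v (S \ {g})) :
    ∀ g ∈ S, v {g} ≥ α * v (M \ {g}) := by
  intro g hg
  have hgM : ({g} : Finset ι) ⊆ M := Finset.singleton_subset_iff.mpr (hS hg)
  -- v {g} ≥ 0
  have hc : 0 ≤ v {g} := by
    have := hsub {g} {g} hgM hgM
    simp at this
    linarith
  -- v S ≤ v (S \ {g}) + v {g}
  have hSdecomp : (S \ {g}) ∪ {g} = S := by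
    ext x; simp; intro hx; rw [hx]; exact hg
  have hs : v S ≤ v (S \ {g}) + v {g} := by
    have := hsub (S \ {g}) {g} ((Finset.sdiff_subset).trans hS) hgM
    rwa [hSdecomp] at this
  -- v (M \ {g}) ≤ v (M \ S) + v (S \ {g})
  have hMdecomp : (M \ S) ∪ (S \ {g}) = M \ {g} := by
    ext x
    simp only [Finset.mem_union, Finset.mem_sdiff, Finset.mem_singleton]
    constructor
    · rintro (⟨h1, h2⟩ | ⟨h1, h2⟩)
      · exact ⟨h1, fun hx => h2 (hx ▸ hg)⟩
      · exact ⟨hS h1, h2⟩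
    · rintro ⟨h1, h2⟩
      by_cases hxS : x ∈ S
      · exact Or.inr ⟨hxS, h2⟩
      · exact Or.inl ⟨h1, hxS⟩
  have hMg : v (M \ {g}) ≤ v (M \ S) + v (S \ {g}) := by
    have := hsub (M \ S) (S \ {g}) Finset.sdiff_subset ((Finset.sdiff_subset).trans hS)
    rwa [hMdecomp] at this
  -- v (S \ {g}) < α * (v (M \ S) + v {g})
  have hb : v (S \ {g}) < α * (v (M \ S) + v {g}) := by
    have h2g := h2 g hg
    have := hsub (M \ S) {g} Finset.sdiff_subset hgM
    nlinarith
  set a := v (M \ S) with ha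
  set b := v (S \ {g}) with hbdef
  set c := v ({g} : Finset ι) with hcdef
  -- key: a * (1 - α) < c * α
  have key : a * (1 - α) < c * α := by
    have h1' : a < α * v S := h1
    have hchain : a * (1 - α) * (1 + α) < c * α * (1 + α) := by
      nlinarith [mul_lt_mul_of_pos_left hb hα0, mul_le_mul_of_nonneg_left hs hα0.le]
    exact lt_of_mul_lt_mul_right hchain (by linarith)
  have hfin : α * (a + b) ≤ c := by
    nlinarith [mul_lt_mul_of_pos_left hb hα0, mul_nonneg hc (by linarith : (0:ℝ) ≤ 1 - 2*α),
      mul_lt_mul_of_pos_left key hα0, mul_nonneg (mul_nonneg hc hα0.le) (by linarith : (0:ℝ) ≤ 1 - 2*α)]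
  have := mul_le_mul_of_nonneg_left hMg hα0.le
  linarith
end

section
/- Let k ≥ 1, let M be a finite set of 2k items, and let w be a Boolean-valued function on subsets of M such that w(A) ≠ w(M\A) whenever |A| = k. Define the valuation v on M by: v(S) = 3|S| if |S| < k; v(S) = 3k if |S| > k; and for |S| = k, v(S) = 3k if w(S) is true and v(S) = 3k − 1 if w(S) is false. Then v is submodular. -/
set_option maxHeartbeats 1600000


/-- The valuation used in the 1-EF lower bound for submodular valuations is
submodular. -/
theorem lower_bound_valuation_submodular {ι : Type*} [DecidableEq ι]
    (k : ℕ) (hk : 1 ≤ k) (M : Finset ι) (hM : M.card = 2 * k)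
    (w : Finset ι → Bool)
    (hw : ∀ A ⊆ M, A.card = k → w A ≠ w (M \ A))
    (v : Finset ι → ℝ)
    (hv : ∀ S ⊆ M, v S =
      if S.card < k then 3 * (S.card : ℝ)
      else if k < S.card then 3 * (k : ℝ)
      else if w S then 3 * (k : ℝ)
      else 3 * (k : ℝ) - 1) :
    ∀ S T : Finset ι, S ⊆ T → T ⊆ M → ∀ g ∈ M,
      v (T ∪ {g}) - v T ≤ v (S ∪ {g}) - v S := by
  intro S T hST hTM g hg
  have hSM : S ⊆ M := hST.trans hTM
  have hgM : {g} ⊆ M := Finset.singleton_subset_iff.mpr hg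
  have hSgM : S ∪ {g} ⊆ M := Finset.union_subset hSM hgM
  have hTgM : T ∪ {g} ⊆ M := Finset.union_subset hTM hgM
  rw [hv S hSM, hv T hTM, hv _ hSgM, hv _ hTgM]
  by_cases hgT : g ∈ T
  · have hT : T ∪ {g} = T := by
      rw [Finset.union_eq_left]; exact Finset.singleton_subset_iff.mpr hgT
    rw [hT]
    by_cases hgS : g ∈ S
    · have hS : S ∪ {g} = S := by
        rw [Finset.union_eq_left]; exact Finset.singleton_subset_iff.mpr hgS
      rw [hS]
      linarith
    · have hS : (S ∪ {g}).card = S.card + 1 := by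
        rw [Finset.union_comm, ← Finset.insert_eq,
          Finset.card_insert_of_notMem hgS]
      clear hv hw hM hSM hgM hSgM hTgM hST hTM hg hT hgT hgS
      simp only [hS]
      split_ifs <;>
        first
          | omega
          | (rify at *; push_cast at *; linarith)
  · have hgS : g ∉ S := fun h => hgT (hST h)
    by_cases hSTeq : S = T
    · subst hSTeq
      linarith
    · have hlt : S.card < T.card :=
        Finset.card_lt_card (lt_of_le_of_ne hST hSTeq)
      have hS : (S ∪ {g}).card = S.card + 1 := by
        rw [Finset.union_comm, ← Finset.insert_eq,
          Finset.card_insert_of_notMem hgS]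
      have hT : (T ∪ {g}).card = T.card + 1 := by
        rw [Finset.union_comm, ← Finset.insert_eq,
          Finset.card_insert_of_notMem hgT]
      clear hv hw hM hSM hgM hSgM hTgM hST hTM hg hgT hgS hSTeq
      simp only [hS, hT]
      split_ifs <;>
        first
          | omega
          | (rify at *; push_cast at *; linarith)
end

section
/- Let k ≥ 1, let M be a finite set of 2k items, and for i = 1, 2 let w_i be a Boolean-valued function on subsets of M such that w_i(A) ≠ w_i(M\A) whenever |A| = k. For i = 1, 2 define the valuation v_i on M by: v_i(S) = 3|S| if |S| < k; v_i(S) = 3k if |S| > k; and for |S| = k, v_i(S) = 3k if w_i(S) is true and v_i(S) = 3k − 1 if w_i(S) is false. Then there exists a subset A of M with v₁(A) ≥ v₁(M\A) and v₂(M\A) ≥ v₂(A) (i.e., an envy-free allocation of M to the two players) if and only if there exists a subset A of M with |A| = k, w₁(A) true, and w₂(M\A) true. -/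
/-- For the valuations used in the 1-EF lower bound for submodular valuations, an
envy-free allocation exists iff there is a size-`k` bundle `A` with `w₁ A` and
`w₂ (M \ A)` both true. -/
theorem ef_exists_iff {ι : Type*} [DecidableEq ι]
    (k : ℕ) (hk : 1 ≤ k) (M : Finset ι) (hM : M.card = 2 * k)
    (w₁ w₂ : Finset ι → Bool)
    (hw₁ : ∀ A ⊆ M, A.card = k → w₁ A ≠ w₁ (M \ A))
    (hw₂ : ∀ A ⊆ M, A.card = k → w₂ A ≠ w₂ (M \ A))
    (v₁ v₂ : Finset ι → ℝ)
    (hv₁ : ∀ S ⊆ M, v₁ S =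
      if S.card < k then 3 * (S.card : ℝ)
      else if k < S.card then 3 * (k : ℝ)
      else if w₁ S then 3 * (k : ℝ)
      else 3 * (k : ℝ) - 1)
    (hv₂ : ∀ S ⊆ M, v₂ S =
      if S.card < k then 3 * (S.card : ℝ)
      else if k < S.card then 3 * (k : ℝ)
      else if w₂ S then 3 * (k : ℝ)
      else 3 * (k : ℝ) - 1) :
    (∃ A ⊆ M, v₁ A ≥ v₁ (M \ A) ∧ v₂ (M \ A) ≥ v₂ A) ↔
      (∃ A ⊆ M, A.card = k ∧ w₁ A = true ∧ w₂ (M \ A) = true) := by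
  constructor
  · rintro ⟨A, hA, h1, h2⟩
    have hAc : A.card ≤ 2 * k := hM ▸ Finset.card_le_card hA
    have hcompl : (M \ A).card = 2 * k - A.card := by
      rw [Finset.card_sdiff_of_subset hA, hM]
    have hv1A := hv₁ A hA
    have hv1C := hv₁ (M \ A) Finset.sdiff_subset
    have hv2A := hv₂ A hA
    have hv2C := hv₂ (M \ A) Finset.sdiff_subset
    rcases lt_trichotomy A.card k with h | h | h
    · exfalso
      rw [hv1A, hv1C, if_pos h, if_neg (by omega : ¬ (M \ A).card < k),
        if_pos (by omega : k < (M \ A).card)] at h1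
      have hA' : (A.card : ℝ) < k := by exact_mod_cast h
      linarith
    · have hck : (M \ A).card = k := by omega
      have hwA := hw₁ A hA h
      have hwB := hw₂ A hA h
      refine ⟨A, hA, h, ?_, ?_⟩
      · rw [hv1A, hv1C, if_neg (by omega : ¬ A.card < k), if_neg (by omega : ¬ k < A.card),
          if_neg (by omega : ¬ (M \ A).card < k), if_neg (by omega : ¬ k < (M \ A).card)] at h1
        by_contra hf
        simp only [Bool.not_eq_true] at hf
        have hct : w₁ (M \ A) = true := by
          cases hb : w₁ (M \ A) with
          | false => exact absurd (hf.trans hb.symm) hwA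
          | true => rfl
        rw [hf, hct] at h1
        simp at h1
        linarith
      · rw [hv2A, hv2C, if_neg (by omega : ¬ A.card < k), if_neg (by omega : ¬ k < A.card),
          if_neg (by omega : ¬ (M \ A).card < k), if_neg (by omega : ¬ k < (M \ A).card)] at h2
        by_contra hf
        simp only [Bool.not_eq_true] at hf
        have hct : w₂ A = true := by
          cases hb : w₂ A with
          | false => exact absurd (hb.trans hf.symm) hwB
          | true => rfl
        rw [hf, hct] at h2
        simp at h2
        linarith
    · exfalso
      rw [hv2A, hv2C, if_neg (by omega : ¬ A.card < k), if_pos h,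
        if_pos (by omega : (M \ A).card < k)] at h2
      have hC' : ((M \ A).card : ℝ) < k := by exact_mod_cast (by omega : (M \ A).card < k)
      linarith
  · rintro ⟨A, hA, h, hw1, hw2⟩
    have hcompl : (M \ A).card = k := by
      rw [Finset.card_sdiff_of_subset hA, hM, h]; omega
    refine ⟨A, hA, ?_, ?_⟩
    · rw [hv₁ A hA, hv₁ (M \ A) Finset.sdiff_subset,
        if_neg (by omega : ¬ A.card < k), if_neg (by omega : ¬ k < A.card),
        if_neg (by omega : ¬ (M \ A).card < k), if_neg (by omega : ¬ k < (M \ A).card),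
        if_pos hw1]
      split <;> linarith
    · rw [hv₂ A hA, hv₂ (M \ A) Finset.sdiff_subset,
        if_neg (by omega : ¬ A.card < k), if_neg (by omega : ¬ k < A.card),
        if_neg (by omega : ¬ (M \ A).card < k), if_neg (by omega : ¬ k < (M \ A).card),
        if_pos hw2]
      split <;> linarith
end

section
/- Let k ≥ 1, let M be a finite set of 2k items, let c be a real number with 0 < c ≤ 1, and for i = 1, 2 let w_i be any Boolean-valued function on subsets of M. For i = 1, 2 define the valuation v_i on M by: v_i(S) = 0 if |S| < k; v_i(S) = 1 if |S| > k; and for |S| = k, v_i(S) = 1 if w_i(S) is true and v_i(S) = 0 if w_i(S) is false. Then there exists a subset A of M with v₁(A) ≥ (c/2)·v₁(M) and v₂(M\A) ≥ (c/2)·v₂(M) (i.e., a c-proportional allocation for the two players) if and only if there exists a subset A of M with |A| = k, w₁(A) true, and w₂(M\A) true. -/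
/-- For the valuations used in the c-Prop lower bound for general valuations, a
c-proportional allocation exists iff there is a size-`k` bundle `A` with `w₁ A` and
`w₂ (M \ A)` both true. -/
theorem cprop_exists_iff {ι : Type*} [DecidableEq ι]
    (k : ℕ) (hk : 1 ≤ k) (M : Finset ι) (hM : M.card = 2 * k)
    (c : ℝ) (hc0 : 0 < c) (hc1 : c ≤ 1)
    (w₁ w₂ : Finset ι → Bool)
    (v₁ v₂ : Finset ι → ℝ)
    (hv₁ : ∀ S ⊆ M, v₁ S =
      if S.card < k then 0
      else if k < S.card then 1
      else if w₁ S then 1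
      else 0)
    (hv₂ : ∀ S ⊆ M, v₂ S =
      if S.card < k then 0
      else if k < S.card then 1
      else if w₂ S then 1
      else 0) :
    (∃ A ⊆ M, v₁ A ≥ (c / 2) * v₁ M ∧ v₂ (M \ A) ≥ (c / 2) * v₂ M) ↔
      (∃ A ⊆ M, A.card = k ∧ w₁ A = true ∧ w₂ (M \ A) = true) := by
  have hc2 : 0 < c / 2 := by linarith
  have hc2' : c / 2 ≤ 1 := by linarith
  have hv1M : v₁ M = 1 := by
    rw [hv₁ M (Finset.Subset.refl M), hM, if_neg (by omega), if_pos (by omega)]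
  have hv2M : v₂ M = 1 := by
    rw [hv₂ M (Finset.Subset.refl M), hM, if_neg (by omega), if_pos (by omega)]
  constructor
  · rintro ⟨A, hAM, h1, h2⟩
    rw [hv1M, mul_one] at h1
    rw [hv2M, mul_one] at h2
    rw [hv₁ A hAM] at h1
    rw [hv₂ (M \ A) (Finset.sdiff_subset)] at h2
    have hcard : (M \ A).card = 2 * k - A.card := by
      rw [Finset.card_sdiff_of_subset hAM, hM]
    have hAle : A.card ≤ 2 * k := hM ▸ Finset.card_le_card hAM
    have hA1 : ¬ A.card < k := by
      intro h; rw [if_pos h] at h1; linarith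
    have hA2 : ¬ k < A.card := by
      intro h
      rw [hcard, if_pos (by omega)] at h2; linarith
    have hAk : A.card = k := by omega
    refine ⟨A, hAM, hAk, ?_, ?_⟩
    · rw [if_neg hA1, if_neg hA2] at h1
      by_contra hw
      rw [if_neg (by simpa using hw)] at h1; linarith
    · rw [hcard, hAk, if_neg (by omega), if_neg (by omega)] at h2
      by_contra hw
      rw [if_neg (by simpa using hw)] at h2; linarith
  · rintro ⟨A, hAM, hAk, hw1, hw2⟩
    have hcard : (M \ A).card = k := by
      rw [Finset.card_sdiff_of_subset hAM, hM, hAk]; omega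
    refine ⟨A, hAM, ?_, ?_⟩
    · rw [hv₁ A hAM, hAk, if_neg (by omega), if_neg (by omega), if_pos hw1, hv1M]
      linarith
    · rw [hv₂ (M \ A) (Finset.sdiff_subset), hcard, if_neg (by omega),
        if_neg (by omega), if_pos hw2, hv2M]
      linarith
end

section
/- Let k ≥ 1, let M be a finite set of 2k items, let c be a real number with 0 < c ≤ 1, and for i = 1, 2 let w_i be a Boolean-valued function on subsets of M such that w_i(A) ≠ w_i(M\A) whenever |A| = k. For i = 1, 2 define the valuation v_i on M by: v_i(S) = 0 if |S| < k; v_i(S) = 1 if |S| > k; and for |S| = k, v_i(S) = 1 if w_i(S) is true and v_i(S) = 0 if w_i(S) is false. Then there exists a subset A of M with v₁(A) ≥ c·v₁(M\A) and v₂(M\A) ≥ c·v₂(A) (i.e., a c-envy-free allocation for the two players) if and only if there exists a subset A of M with |A| = k, w₁(A) true, and w₂(M\A) true. -/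
/-- For the valuations used in the c-EF lower bound for general valuations, a
c-envy-free allocation exists iff there is a size-`k` bundle `A` with `w₁ A` and
`w₂ (M \ A)` both true. -/
theorem cef_exists_iff {ι : Type*} [DecidableEq ι]
    (k : ℕ) (hk : 1 ≤ k) (M : Finset ι) (hM : M.card = 2 * k)
    (c : ℝ) (hc0 : 0 < c) (hc1 : c ≤ 1)
    (w₁ w₂ : Finset ι → Bool)
    (hw₁ : ∀ A ⊆ M, A.card = k → w₁ A ≠ w₁ (M \ A))
    (hw₂ : ∀ A ⊆ M, A.card = k → w₂ A ≠ w₂ (M \ A))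
    (v₁ v₂ : Finset ι → ℝ)
    (hv₁ : ∀ S ⊆ M, v₁ S =
      if S.card < k then 0
      else if k < S.card then 1
      else if w₁ S then 1
      else 0)
    (hv₂ : ∀ S ⊆ M, v₂ S =
      if S.card < k then 0
      else if k < S.card then 1
      else if w₂ S then 1
      else 0) :
    (∃ A ⊆ M, v₁ A ≥ c * v₁ (M \ A) ∧ v₂ (M \ A) ≥ c * v₂ A) ↔
      (∃ A ⊆ M, A.card = k ∧ w₁ A = true ∧ w₂ (M \ A) = true) := by
  constructor
  · rintro ⟨A, hA, h1, h2⟩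
    have hAle : A.card ≤ 2 * k := hM ▸ Finset.card_le_card hA
    have hcd : (M \ A).card = 2 * k - A.card := by
      rw [Finset.card_sdiff_of_subset hA, hM]
    have hv1A := hv₁ A hA
    have hv1B := hv₁ (M \ A) Finset.sdiff_subset
    have hv2A := hv₂ A hA
    have hv2B := hv₂ (M \ A) Finset.sdiff_subset
    rcases lt_trichotomy A.card k with h | h | h
    · rw [if_pos h] at hv1A
      rw [if_neg (by omega), if_pos (by omega)] at hv1B
      rw [hv1A, hv1B] at h1
      nlinarith
    · refine ⟨A, hA, h, ?_, ?_⟩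
      · cases h1A : w₁ A with
        | true => rfl
        | false =>
          exfalso
          have h1B : w₁ (M \ A) = true := by
            cases h1B : w₁ (M \ A) with
            | true => rfl
            | false => exact absurd (h1A.trans h1B.symm) (hw₁ A hA h)
          rw [if_neg (by omega), if_neg (by omega), if_neg (by simp [h1A])] at hv1A
          rw [if_neg (by omega), if_neg (by omega), if_pos h1B] at hv1B
          rw [hv1A, hv1B] at h1
          nlinarith
      · cases h2B : w₂ (M \ A) with
        | true => rfl
        | false =>
          exfalso
          have h2A : w₂ A = true := by
            cases h2A : w₂ A with
            | true => rfl
            | false => exact absurd (h2A.trans h2B.symm) (hw₂ A hA h)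
          rw [if_neg (by omega), if_neg (by omega), if_pos h2A] at hv2A
          rw [if_neg (by omega), if_neg (by omega), if_neg (by simp [h2B])] at hv2B
          rw [hv2A, hv2B] at h2
          nlinarith
    · rw [if_pos (by omega)] at hv2B
      rw [if_neg (by omega), if_pos h] at hv2A
      rw [hv2A, hv2B] at h2
      nlinarith
  · rintro ⟨A, hA, h, h1, h2⟩
    have hAle : A.card ≤ 2 * k := hM ▸ Finset.card_le_card hA
    have hcd : (M \ A).card = 2 * k - A.card := by
      rw [Finset.card_sdiff_of_subset hA, hM]
    have hv1A := hv₁ A hA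
    have hv1B := hv₁ (M \ A) Finset.sdiff_subset
    have hv2A := hv₂ A hA
    have hv2B := hv₂ (M \ A) Finset.sdiff_subset
    have h1B : w₁ (M \ A) = false := by
      cases hx : w₁ (M \ A) with
      | false => rfl
      | true => exact absurd (h1.trans hx.symm) (hw₁ A hA h)
    refine ⟨A, hA, ?_, ?_⟩
    · rw [if_neg (by omega), if_neg (by omega), if_pos h1] at hv1A
      rw [if_neg (by omega), if_neg (by omega), if_neg (by simp [h1B])] at hv1B
      rw [hv1A, hv1B]
      nlinarith
    · rw [if_neg (by omega), if_neg (by omega), if_pos h2] at hv2B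
      rw [hv2B]
      have : v₂ A ≤ 1 := by
        rw [hv2A]
        split_ifs <;> norm_num
      nlinarith
end

section
/- Let k ≥ 1, let M be a finite set of 2k items, and let w be a Boolean-valued function on subsets of M such that w(A) ≠ w(M\A) whenever |A| = k. Define the valuation v on M by: v(∅) = 0; v(S) = 1 if 0 < |S| < k; v(S) = 2 if k < |S| < 2k; v(M) = 3; and for |S| = k, v(S) = 2 if w(S) is true and v(S) = 1 if w(S) is false. Then v is subadditive. -/
/-- The valuation used in the c-EF lower bound for subadditive valuations is
subadditive. -/
theorem lower_bound_valuation_subadditive {ι : Type*} [DecidableEq ι]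
    (k : ℕ) (hk : 1 ≤ k) (M : Finset ι) (hM : M.card = 2 * k)
    (w : Finset ι → Bool)
    (hw : ∀ A ⊆ M, A.card = k → w A ≠ w (M \ A))
    (v : Finset ι → ℝ)
    (hv : ∀ S ⊆ M, v S =
      if S.card = 0 then 0
      else if S.card < k then 1
      else if S.card = k then (if w S then 2 else 1)
      else if S.card < 2 * k then 2
      else 3) :
    ∀ S T : Finset ι, S ⊆ M → T ⊆ M → v (S ∪ T) ≤ v S + v T := by
  have h0 : ∀ S ⊆ M, 0 ≤ v S := by
    intro S hS
    rw [hv S hS]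
    split_ifs <;> norm_num
  have h1 : ∀ S ⊆ M, S.Nonempty → 1 ≤ v S := by
    intro S hS hne
    rw [hv S hS]
    have : S.card ≠ 0 := by simpa [Finset.card_eq_zero] using hne.ne_empty
    split_ifs <;> norm_num <;> tauto
  have h2 : ∀ S ⊆ M, k < S.card → 2 ≤ v S := by
    intro S hS hcard
    rw [hv S hS]
    have h1' : S.card ≠ 0 := by omega
    have h2' : ¬ S.card < k := by omega
    have h3' : S.card ≠ k := by omega
    split_ifs <;> first | omega | norm_num
  have h4 : ∀ S ⊆ M, S.card < 2 * k → v S ≤ 2 := by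
    intro S hS hcard
    rw [hv S hS]
    split_ifs <;> first | omega | norm_num
  intro S T hS hT
  have hST : S ∪ T ⊆ M := Finset.union_subset hS hT
  have hcardST : (S ∪ T).card ≤ 2 * k := hM ▸ Finset.card_le_card hST
  rcases eq_or_ne S ∅ with rfl | hSne
  · rw [hv ∅ (Finset.empty_subset M)]
    simp
  rcases eq_or_ne T ∅ with rfl | hTne
  · rw [hv ∅ (Finset.empty_subset M)]
    simp
  have hSne' : S.Nonempty := Finset.nonempty_iff_ne_empty.mpr hSne
  have hTne' : T.Nonempty := Finset.nonempty_iff_ne_empty.mpr hTne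
  rcases lt_or_eq_of_le hcardST with hlt | heq
  · -- union is not all of M
    have := h4 _ hST hlt
    have := h1 S hS hSne'
    have := h1 T hT hTne'
    linarith
  · -- union is all of M
    have hUM : S ∪ T = M := Finset.eq_of_subset_of_card_le hST (by omega)
    have hsum : 2 * k ≤ S.card + T.card := by
      have := Finset.card_union_le S T
      omega
    have hvU : v (S ∪ T) = 3 := by
      rw [hv _ hST]
      have h1' : (S ∪ T).card ≠ 0 := by omega
      have h2' : ¬ (S ∪ T).card < k := by omega
      have h3' : (S ∪ T).card ≠ k := by omega
      have h4' : ¬ (S ∪ T).card < 2 * k := by omega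
      split_ifs <;> first | omega | norm_num
    rw [hvU]
    rcases lt_trichotomy S.card k with hSk | hSk | hSk
    · -- then T.card > k
      have hTk : k < T.card := by omega
      have := h2 T hT hTk
      have := h1 S hS hSne'
      linarith
    · rcases lt_trichotomy T.card k with hTk | hTk | hTk
      · omega
      · -- both card k: disjoint, T = M \ S
        have hcardU : (S ∪ T).card = 2 * k := heq
        have hinter : (S ∩ T).card = 0 := by
          have := Finset.card_union_add_card_inter S T
          omega
        have hdisj : Disjoint S T := by
          rw [Finset.disjoint_iff_inter_eq_empty, ← Finset.card_eq_zero]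
          exact hinter
        have hTeq : T = M \ S := by
          rw [← hUM, Finset.union_sdiff_cancel_left hdisj]
        have hwST := hw S hS hSk
        rw [← hTeq] at hwST
        have hvS : v S = if w S then 2 else 1 := by
          rw [hv S hS]
          have h1' : S.card ≠ 0 := by omega
          have h2' : ¬ S.card < k := by omega
          split_ifs <;> first | omega | norm_num
        have hvT : v T = if w T then 2 else 1 := by
          rw [hv T hT]
          have h1' : T.card ≠ 0 := by omega
          have h2' : ¬ T.card < k := by omega
          split_ifs <;> first | omega | norm_num
        rw [hvS, hvT]
        rcases Bool.eq_false_or_eq_true (w S) with hws | hws <;>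
          rcases Bool.eq_false_or_eq_true (w T) with hwt | hwt <;>
          rw [hws, hwt] at hwST ⊢ <;> simp at hwST ⊢ <;> norm_num
      · have := h2 T hT hTk
        have := h1 S hS hSne'
        linarith
    · have := h2 S hS hSk
      have := h1 T hT hTne'
      linarith
end

section
/- Let k ≥ 1, let M be a finite set of 2k items, and for i = 1, 2 let w_i be a Boolean-valued function on subsets of M such that w_i(A) ≠ w_i(M\A) whenever |A| = k. For i = 1, 2 define the valuation v_i on M by: v_i(∅) = 0; v_i(S) = 1 if 0 < |S| < k; v_i(S) = 2 if k < |S| < 2k; v_i(M) = 3; and for |S| = k, v_i(S) = 2 if w_i(S) is true and v_i(S) = 1 if w_i(S) is false. Then for every real c with 2/3 < c ≤ 1, every real c' with 1/2 < c' ≤ 1, and every subset A of M, the allocation (A, M\A) is c-proportional for v₁, v₂ (i.e., v₁(A) ≥ (c/2)·v₁(M) and v₂(M\A) ≥ (c/2)·v₂(M)) if and only if it is c'-envy-free for v₁, v₂ (i.e., v₁(A) ≥ c'·v₁(M\A) and v₂(M\A) ≥ c'·v₂(A)). -/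
private lemma key_one_player {ι : Type*} [DecidableEq ι]
    (k : ℕ) (hk : 1 ≤ k) (M : Finset ι) (hM : M.card = 2 * k)
    (w : Finset ι → Bool) (v : Finset ι → ℝ)
    (hv : ∀ S ⊆ M, v S =
      if S.card = 0 then 0
      else if S.card < k then 1
      else if S.card = k then (if w S then 2 else 1)
      else if S.card < 2 * k then 2
      else 3)
    (c c' : ℝ) (hc1 : 2 / 3 < c) (hc2 : c ≤ 1) (hc'1 : 1 / 2 < c') (hc'2 : c' ≤ 1)
    (A : Finset ι) (hA : A ⊆ M)
    (hw : A.card = k → w A ≠ w (M \ A)) :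
    (v A ≥ (c / 2) * v M ↔ v A ≥ c' * v (M \ A)) := by
  have hvM : v M = 3 := by
    rw [hv M (le_refl M), hM, if_neg (by omega), if_neg (by omega),
      if_neg (by omega), if_neg (by omega)]
  have hBsub : M \ A ⊆ M := Finset.sdiff_subset
  have hBcard : (M \ A).card = 2 * k - A.card := by
    rw [Finset.card_sdiff_of_subset hA, hM]
  have hvA := hv A hA
  have hvB := hv _ hBsub
  have hacle : A.card ≤ 2 * k := by
    calc A.card ≤ M.card := Finset.card_le_card hA
    _ = 2 * k := hM
  rw [hvM]
  rcases lt_trichotomy A.card k with h | h | h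
  · rcases Nat.eq_zero_or_pos A.card with h0 | h0
    · have hA' : v A = 0 := by rw [hvA, if_pos h0]
      have hB' : v (M \ A) = 3 := by
        rw [hvB, if_neg (by omega), if_neg (by omega), if_neg (by omega),
          if_neg (by omega)]
      rw [hA', hB']
      constructor <;> intro hx <;> nlinarith
    · have hA' : v A = 1 := by rw [hvA, if_neg (by omega), if_pos h]
      have hB' : v (M \ A) = 2 := by
        rw [hvB, if_neg (by omega), if_neg (by omega), if_neg (by omega),
          if_pos (by omega)]
      rw [hA', hB']
      constructor <;> intro hx <;> nlinarith
  · have hwne := hw h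
    have hA' : v A = if w A then 2 else 1 := by
      rw [hvA, if_neg (by omega), if_neg (by omega), if_pos h]
    have hB' : v (M \ A) = if w (M \ A) then 2 else 1 := by
      rw [hvB, if_neg (by omega), if_neg (by omega), if_pos (by omega)]
    cases hwA : w A with
    | true =>
      have hwB : w (M \ A) = false := by
        rw [hwA] at hwne
        cases hwB' : w (M \ A) with
        | true => exact absurd hwB'.symm hwne
        | false => rfl
      rw [hwA] at hA'
      rw [hwB] at hB'
      simp only [if_true, Bool.false_eq_true, if_false] at hA' hB'
      rw [hA', hB']
      constructor <;> intro hx <;> nlinarith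
    | false =>
      have hwB : w (M \ A) = true := by
        rw [hwA] at hwne
        cases hwB' : w (M \ A) with
        | true => rfl
        | false => exact absurd hwB'.symm hwne
      rw [hwA] at hA'
      rw [hwB] at hB'
      simp only [if_true, Bool.false_eq_true, if_false] at hA' hB'
      rw [hA', hB']
      constructor <;> intro hx <;> nlinarith
  · rcases eq_or_lt_of_le hacle with h2 | h2
    · have hA' : v A = 3 := by
        rw [hvA, if_neg (by omega), if_neg (by omega), if_neg (by omega),
          if_neg (by omega)]
      have hB' : v (M \ A) = 0 := by rw [hvB, if_pos (by omega)]
      rw [hA', hB']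
      constructor <;> intro hx <;> nlinarith
    · have hA' : v A = 2 := by
        rw [hvA, if_neg (by omega), if_neg (by omega), if_neg (by omega),
          if_pos h2]
      have hB' : v (M \ A) = 1 := by
        rw [hvB, if_neg (by omega), if_pos (by omega)]
      rw [hA', hB']
      constructor <;> intro hx <;> nlinarith

/-- For the valuations used in the subadditive lower bounds, an allocation is
c-proportional (for `2/3 < c ≤ 1`) iff it is c'-envy-free (for `1/2 < c' ≤ 1`). -/
theorem cprop_iff_cef {ι : Type*} [DecidableEq ι]
    (k : ℕ) (hk : 1 ≤ k) (M : Finset ι) (hM : M.card = 2 * k)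
    (w₁ w₂ : Finset ι → Bool)
    (hw₁ : ∀ A ⊆ M, A.card = k → w₁ A ≠ w₁ (M \ A))
    (hw₂ : ∀ A ⊆ M, A.card = k → w₂ A ≠ w₂ (M \ A))
    (v₁ v₂ : Finset ι → ℝ)
    (hv₁ : ∀ S ⊆ M, v₁ S =
      if S.card = 0 then 0
      else if S.card < k then 1
      else if S.card = k then (if w₁ S then 2 else 1)
      else if S.card < 2 * k then 2
      else 3)
    (hv₂ : ∀ S ⊆ M, v₂ S =
      if S.card = 0 then 0
      else if S.card < k then 1
      else if S.card = k then (if w₂ S then 2 else 1)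
      else if S.card < 2 * k then 2
      else 3) :
    ∀ c c' : ℝ, 2 / 3 < c → c ≤ 1 → 1 / 2 < c' → c' ≤ 1 →
      ∀ A ⊆ M,
        ((v₁ A ≥ (c / 2) * v₁ M ∧ v₂ (M \ A) ≥ (c / 2) * v₂ M) ↔
          (v₁ A ≥ c' * v₁ (M \ A) ∧ v₂ (M \ A) ≥ c' * v₂ A)) := by
  intro c c' hc1 hc2 hc'1 hc'2 A hA
  have hdd : M \ (M \ A) = A := Finset.sdiff_sdiff_eq_self hA
  have h1 := key_one_player k hk M hM w₁ v₁ hv₁ c c' hc1 hc2 hc'1 hc'2 A hA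
    (hw₁ A hA)
  have h2 := key_one_player k hk M hM w₂ v₂ hv₂ c c' hc1 hc2 hc'1 hc'2
    (M \ A) Finset.sdiff_subset (fun hcard => by
      rw [hdd]
      have hAk : A.card = k := by
        have := Finset.card_sdiff_of_subset hA
        rw [hM] at this
        have hle : A.card ≤ 2 * k := by
          calc A.card ≤ M.card := Finset.card_le_card hA
          _ = 2 * k := hM
        omega
      exact (hw₂ A hA hAk).symm)
  rw [hdd] at h2
  exact and_congr h1 h2
end
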